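/- Let W' ⊂ ℝ^ℓ be a compact convex set with 0 in its interior, and let θ be an even probability measure on the unit sphere S^{ℓ−1} whose support spans ℝ^ℓ (i.e. is not contained in any great subsphere). Let h_{W'}(u) = max{⟨u, x⟩ : x ∈ W'} denote the support function of W'. Then there exist unit vectors u_1, …, u_{2ℓ} ∈ S^{ℓ−1} and pairwise disjoint Borel sets U_1, …, U_{2ℓ} ⊆ S^{ℓ−1} with θ(U_a) > 0 for all a, such that the set W = ⋂_{a=1}^{2ℓ} {x ∈ ℝ^ℓ : ⟨u_a, x⟩ ≤ h_{W'}(u_a) + 3} is compact, W' is contained in the interior of W, and for every a ∈ {1,…,2ℓ}, every u ∈ U_a and every d ∈ ℝ with h_{W'}(u_a) + 1 < d < h_{W'}(u_a) + 2, the hyperplane {x : ⟨u, x⟩ = d} strictly separates W' from the facet f_a = W ∩ {x : ⟨u_a, x⟩ = h_{W'}(u_a) + 3}, i.e. W' ⊆ {x : ⟨u, x⟩ < d} and f_a ⊆ {x : ⟨u, x⟩ > d}. -/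

import Mathlib

open MeasureTheory Set

noncomputable section

/-- Euclidean space `ℝ^ℓ`. -/
abbrev V (ℓ : ℕ) := EuclideanSpace ℝ (Fin ℓ)

/-- The support of a measure: the smallest closed set of full measure, described as the set of
points all of whose neighbourhoods have positive measure. -/
def msupport {α : Type*} [TopologicalSpace α] [MeasurableSpace α] (θ : Measure α) : Set α :=
  {x | ∀ U ∈ nhds x, θ U ≠ 0}

/-- The support function `h_{W'}(u) = max{⟨u, x⟩ : x ∈ W'}` of a set `W' ⊆ ℝ^ℓ`. -/
def suppFn (ℓ : ℕ) (W' : Set (V ℓ)) (u : V ℓ) : ℝ :=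
  sSup ((fun x => (inner ℝ u x : ℝ)) '' W')

lemma msupport_subset_sphere {ℓ : ℕ} (θ : Measure (V ℓ)) [IsProbabilityMeasure θ]
    (hsphere : θ (Metric.sphere (0 : V ℓ) 1) = 1) :
    msupport θ ⊆ Metric.sphere (0 : V ℓ) 1 := by
  intro x hx
  by_contra hxs
  refine hx (Metric.sphere (0 : V ℓ) 1)ᶜ
    (Metric.isClosed_sphere.isOpen_compl.mem_nhds hxs) ?_
  rw [measure_compl Metric.isClosed_sphere.measurableSet (measure_ne_top θ _),
    measure_univ, hsphere, tsub_self]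

lemma neg_mem_msupport {ℓ : ℕ} (θ : Measure (V ℓ))
    (heven : ∀ A : Set (V ℓ), MeasurableSet A → θ (Neg.neg ⁻¹' A) = θ A)
    {x : V ℓ} (hx : x ∈ msupport θ) : -x ∈ msupport θ := by
  intro U hU
  obtain ⟨O, hOU, hO, hxO⟩ := mem_nhds_iff.mp hU
  have h1 : θ (Neg.neg ⁻¹' O) ≠ 0 :=
    hx _ ((hO.preimage continuous_neg).mem_nhds (by simpa using hxO))
  intro h0
  rw [heven O hO.measurableSet] at h1
  exact h1 (measure_mono_null hOU h0)

/-- Lemma 3 of the paper. Given a compact convex `W'` with `0 ∈ Int W'`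
and an even probability measure `θ` on the sphere whose support spans `ℝ^ℓ`, there are unit
vectors `u_1, …, u_{2ℓ}` and pairwise disjoint Borel sets `U_a ⊆ S^{ℓ−1}` of positive
`θ`-measure such that `W = ⋂_a {x : ⟨u_a, x⟩ ≤ h_{W'}(u_a) + 3}` is compact, contains `W'` in
its interior, and every hyperplane `{x : ⟨u, x⟩ = d}` with `u ∈ U_a` and
`h_{W'}(u_a) + 1 < d < h_{W'}(u_a) + 2` strictly separates `W'` from the facet
`f_a = W ∩ {x : ⟨u_a, x⟩ = h_{W'}(u_a) + 3}`. -/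
theorem exists_good_window (ℓ : ℕ) (W' : Set (V ℓ))
    (hW'cpt : IsCompact W') (hW'conv : Convex ℝ W')
    (h0 : (0 : V ℓ) ∈ interior W')
    (θ : Measure (V ℓ)) [IsProbabilityMeasure θ]
    (hsphere : θ (Metric.sphere (0 : V ℓ) 1) = 1)
    (heven : ∀ A : Set (V ℓ), MeasurableSet A → θ (Neg.neg ⁻¹' A) = θ A)
    (hspan : Submodule.span ℝ (msupport θ) = ⊤) :
    ∃ (u : Fin (2 * ℓ) → V ℓ) (U : Fin (2 * ℓ) → Set (V ℓ)),
      (∀ a, ‖u a‖ = 1) ∧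
      (∀ a, MeasurableSet (U a) ∧ U a ⊆ Metric.sphere (0 : V ℓ) 1 ∧ 0 < θ (U a)) ∧
      Pairwise (Function.onFun Disjoint U) ∧
      IsCompact (⋂ a, {x : V ℓ | inner ℝ (u a) x ≤ suppFn ℓ W' (u a) + 3}) ∧
      W' ⊆ interior (⋂ a, {x : V ℓ | inner ℝ (u a) x ≤ suppFn ℓ W' (u a) + 3}) ∧
      (∀ a, ∀ v ∈ U a, ∀ d : ℝ,
        suppFn ℓ W' (u a) + 1 < d → d < suppFn ℓ W' (u a) + 2 →
        (∀ x ∈ W', (inner ℝ v x : ℝ) < d) ∧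
        (∀ x ∈ (⋂ b, {x : V ℓ | inner ℝ (u b) x ≤ suppFn ℓ W' (u b) + 3}) ∩
            {x : V ℓ | (inner ℝ (u a) x : ℝ) = suppFn ℓ W' (u a) + 3},
          d < (inner ℝ v x : ℝ))) := by
  -- rule out ℓ = 0
  rcases Nat.eq_zero_or_pos ℓ with hl0 | hl
  · exfalso
    subst hl0
    have hempty : Metric.sphere (0 : V 0) 1 = ∅ := by
      ext x
      simp only [Metric.mem_sphere, mem_empty_iff_false, iff_false, dist_zero_right]
      have hx0 : x = 0 := by ext i; exact i.elim0
      rw [hx0, norm_zero]; norm_num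
    rw [hempty, measure_empty] at hsphere
    exact zero_ne_one hsphere
  -- basis inside the support
  obtain ⟨b, hbsub, hbspan, hbli⟩ := exists_linearIndependent ℝ (msupport θ)
  have hbspan' : Submodule.span ℝ b = ⊤ := hbspan.trans hspan
  let B : Module.Basis b ℝ (V ℓ) := Module.Basis.mk hbli (by rw [Subtype.range_coe]; exact hbspan'.ge)
  haveI : Fintype b := FiniteDimensional.fintypeBasisIndex B
  have hcard : Fintype.card b = ℓ := by
    rw [← Module.finrank_eq_card_basis B, finrank_euclideanSpace_fin]
  let f : Fin ℓ ≃ b := (Fintype.equivFinOfCardEq hcard).symm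
  let e : Fin ℓ → V ℓ := fun i => (f i : V ℓ)
  have he_mem : ∀ i, e i ∈ msupport θ := fun i => hbsub (f i).2
  have he_li : LinearIndependent ℝ e := hbli.comp f f.injective
  have he_range : Set.range e = b := by
    have : e = Subtype.val ∘ f := rfl
    rw [this, Set.range_comp, Equiv.range_eq_univ, Set.image_univ, Subtype.range_coe]
  have he_span : Submodule.span ℝ (Set.range e) = ⊤ := by rw [he_range, hbspan']
  have he_norm : ∀ i, ‖e i‖ = 1 := fun i => by
    have := msupport_subset_sphere θ hsphere (he_mem i)
    rwa [mem_sphere_zero_iff_norm] at this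
  have he_ne_neg : ∀ i j, e i ≠ -e j := by
    intro i j h
    by_cases hij : i = j
    · subst hij
      have h2 : e i + e i = 0 := by nth_rewrite 2 [h]; exact add_neg_cancel _
      have h3 : e i = 0 := by
        have h4 : (2 : ℝ) • e i = 0 := by rw [two_smul]; exact h2
        simpa using (smul_eq_zero.mp h4).resolve_left (by norm_num)
      have := he_norm i
      rw [h3, norm_zero] at this; norm_num at this
    · have hsum : e i + e j = 0 := by rw [h]; exact neg_add_cancel _
      have := linearIndependent_iff'.mp he_li {i, j} (fun _ => 1)
        (by rw [Finset.sum_pair hij]; simpa using hsum) i (by simp)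
      norm_num at this
  have he_inj : Function.Injective e := he_li.injective
  -- the 2ℓ directions
  let u : Fin (2 * ℓ) → V ℓ := fun a =>
    if h : (a : ℕ) < ℓ then e ⟨a, h⟩ else -e ⟨(a : ℕ) - ℓ, by have := a.isLt; omega⟩
  have hupos : ∀ (i : Fin ℓ) (h : (i : ℕ) < 2 * ℓ), u ⟨i, h⟩ = e i := by
    intro i h; simp only [u, dif_pos i.isLt]
  have huneg : ∀ (i : Fin ℓ) (h : (i : ℕ) + ℓ < 2 * ℓ), u ⟨(i : ℕ) + ℓ, h⟩ = -e i := by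
    intro i h
    have hnlt : ¬ ((⟨(i : ℕ) + ℓ, h⟩ : Fin (2 * ℓ)) : ℕ) < ℓ := by simp
    simp only [u, dif_neg hnlt]
    congr 1
    ext
    simp
  have hu_norm : ∀ a, ‖u a‖ = 1 := by
    intro a
    by_cases h : (a : ℕ) < ℓ
    · simp only [u, dif_pos h]; exact he_norm _
    · simp only [u, dif_neg h, norm_neg]; exact he_norm _
  have hu_mem : ∀ a, u a ∈ msupport θ := by
    intro a
    by_cases h : (a : ℕ) < ℓ
    · simp only [u, dif_pos h]; exact he_mem _
    · simp only [u, dif_neg h]; exact neg_mem_msupport θ heven (he_mem _)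
  have hu_inj : Function.Injective u := by
    intro a b hab
    by_cases ha : (a : ℕ) < ℓ <;> by_cases hb : (b : ℕ) < ℓ
    · simp only [u, dif_pos ha, dif_pos hb] at hab
      have := he_inj hab
      have := congrArg Fin.val this
      simp at this
      exact Fin.ext this
    · simp only [u, dif_pos ha, dif_neg hb] at hab
      exact absurd hab (he_ne_neg _ _)
    · simp only [u, dif_neg ha, dif_pos hb] at hab
      exact absurd (neg_eq_iff_eq_neg.mp hab) (he_ne_neg _ _)
    · simp only [u, dif_neg ha, dif_neg hb, neg_inj] at hab
      have := congrArg Fin.val (he_inj hab)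
      simp at this
      have h2a := a.isLt; have h2b := b.isLt
      exact Fin.ext (by omega)
  -- support function facts
  have h0' : (0 : V ℓ) ∈ W' := interior_subset h0
  have hinner_cont : ∀ v : V ℓ, Continuous fun x : V ℓ => (inner ℝ v x : ℝ) :=
    fun v => Continuous.inner continuous_const continuous_id
  have hbdd : ∀ v : V ℓ, BddAbove ((fun x => (inner ℝ v x : ℝ)) '' W') :=
    fun v => (hW'cpt.image (hinner_cont v)).bddAbove
  have hle : ∀ (v : V ℓ), ∀ x ∈ W', (inner ℝ v x : ℝ) ≤ suppFn ℓ W' v :=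
    fun v x hx => le_csSup (hbdd v) ⟨x, hx, rfl⟩
  have hnn : ∀ v : V ℓ, 0 ≤ suppFn ℓ W' v := by
    intro v
    have := hle v 0 h0'
    simpa using this
  -- the window W
  set Wd := ⋂ a, {x : V ℓ | (inner ℝ (u a) x : ℝ) ≤ suppFn ℓ W' (u a) + 3} with hWd
  have hWclosed : IsClosed Wd :=
    isClosed_iInter fun a => isClosed_le (hinner_cont (u a)) continuous_const
  -- the coordinate map
  let T : V ℓ →ₗ[ℝ] (Fin ℓ → ℝ) :=
    LinearMap.pi fun i => ((innerSL ℝ (e i)).toLinearMap)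
  have hTker : LinearMap.ker T = ⊥ := by
    rw [LinearMap.ker_eq_bot']
    intro x hx
    have hx' : ∀ i, (inner ℝ (e i) x : ℝ) = 0 := fun i => congrFun hx i
    have hall : ∀ v ∈ Submodule.span ℝ (Set.range e), (inner ℝ v x : ℝ) = 0 := by
      intro v hv
      induction hv using Submodule.span_induction with
      | mem v hm => obtain ⟨i, rfl⟩ := hm; exact hx' i
      | zero => simp
      | add v w _ _ hv hw => rw [inner_add_left, hv, hw, add_zero]
      | smul c v _ hv => rw [real_inner_smul_left, hv, mul_zero]
    have := hall x (he_span ▸ Submodule.mem_top)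
    exact inner_self_eq_zero.mp this
  have hTemb : Topology.IsClosedEmbedding T := LinearMap.isClosedEmbedding_of_injective hTker
  -- index helpers
  have hltpos : ∀ i : Fin ℓ, (i : ℕ) < 2 * ℓ := fun i => by have := i.isLt; omega
  have hltneg : ∀ i : Fin ℓ, (i : ℕ) + ℓ < 2 * ℓ := fun i => by have := i.isLt; omega
  -- compactness of W
  have hWcpt : IsCompact Wd := by
    have hK : IsCompact (Set.pi Set.univ fun i : Fin ℓ =>
        Icc (-(suppFn ℓ W' (u ⟨(i : ℕ) + ℓ, hltneg i⟩) + 3))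
          (suppFn ℓ W' (u ⟨(i : ℕ), hltpos i⟩) + 3)) :=
      isCompact_univ_pi fun i => isCompact_Icc
    refine (hTemb.isCompact_preimage hK).of_isClosed_subset hWclosed ?_
    intro x hx
    intro i _
    simp only [mem_Icc]
    have hT : T x i = (inner ℝ (e i) x : ℝ) := rfl
    constructor
    · have h1 := (mem_iInter.mp hx) ⟨(i : ℕ) + ℓ, hltneg i⟩
      rw [mem_setOf_eq, huneg i (hltneg i), inner_neg_left] at h1
      rw [hT, huneg i (hltneg i)]
      linarith
    · have h1 := (mem_iInter.mp hx) ⟨(i : ℕ), hltpos i⟩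
      rw [mem_setOf_eq, hupos i (hltpos i)] at h1
      rw [hT, hupos i (hltpos i)]
      exact h1
  -- bounds
  obtain ⟨R0, hR0⟩ := hW'cpt.isBounded.subset_closedBall (0 : V ℓ)
  set R : ℝ := max R0 1 with hRdef
  have hR1 : (1 : ℝ) ≤ R := le_max_right _ _
  have hRpos : (0 : ℝ) < R := lt_of_lt_of_le one_pos hR1
  have hR : ∀ x ∈ W', ‖x‖ ≤ R := by
    intro x hx
    have := hR0 hx
    rw [Metric.mem_closedBall, dist_zero_right] at this
    exact this.trans (le_max_left _ _)
  obtain ⟨R0', hR0'⟩ := hWcpt.isBounded.subset_closedBall (0 : V ℓ)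
  set R' : ℝ := max R0' 1 with hR'def
  have hR'1 : (1 : ℝ) ≤ R' := le_max_right _ _
  have hR'pos : (0 : ℝ) < R' := lt_of_lt_of_le one_pos hR'1
  have hR' : ∀ x ∈ Wd, ‖x‖ ≤ R' := by
    intro x hx
    have := hR0' hx
    rw [Metric.mem_closedBall, dist_zero_right] at this
    exact this.trans (le_max_left _ _)
  -- minimal distance between the directions
  have h2ℓ : 1 < 2 * ℓ := by omega
  set P : Finset (Fin (2 * ℓ) × Fin (2 * ℓ)) :=
    Finset.univ.filter (fun p => p.1 ≠ p.2) with hPdef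
  have hPne : P.Nonempty := by
    refine ⟨(⟨0, by omega⟩, ⟨1, by omega⟩), ?_⟩
    rw [hPdef]
    refine Finset.mem_filter.mpr ⟨Finset.mem_univ _, ?_⟩
    simp [Fin.ext_iff]
  set m : ℝ := P.inf' hPne (fun p => dist (u p.1) (u p.2)) with hmdef
  have hm : 0 < m := by
    rw [hmdef, Finset.lt_inf'_iff]
    intro p hp
    rw [hPdef, Finset.mem_filter] at hp
    exact dist_pos.mpr fun h => hp.2 (hu_inj h)
  have hmle : ∀ a b : Fin (2 * ℓ), a ≠ b → m ≤ dist (u a) (u b) := by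
    intro a b hab
    have hmem : (a, b) ∈ P := by
      rw [hPdef]
      exact Finset.mem_filter.mpr ⟨Finset.mem_univ _, hab⟩
    exact Finset.inf'_le _ hmem
  -- the neighbourhoods
  set ε : ℝ := min (min (1 / R) (1 / R')) (m / 2) with hεdef
  have hε : 0 < ε := by
    apply lt_min (lt_min (by positivity) (by positivity)) (by positivity)
  have hεR : ε * R ≤ 1 := by
    have h1 : ε ≤ 1 / R := le_trans (min_le_left _ _) (min_le_left _ _)
    calc ε * R ≤ (1 / R) * R := by nlinarith
    _ = 1 := by field_simp
  have hεR' : ε * R' ≤ 1 := by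
    have h1 : ε ≤ 1 / R' := le_trans (min_le_left _ _) (min_le_right _ _)
    calc ε * R' ≤ (1 / R') * R' := by nlinarith
    _ = 1 := by field_simp
  have hεm : 2 * ε ≤ m := by
    have := min_le_right (min (1 / R) (1 / R')) (m / 2)
    rw [← hεdef] at this
    linarith
  set U : Fin (2 * ℓ) → Set (V ℓ) :=
    fun a => Metric.ball (u a) ε ∩ Metric.sphere (0 : V ℓ) 1 with hUdef
  -- compl of the sphere is null
  have hcompl : θ (Metric.sphere (0 : V ℓ) 1)ᶜ = 0 := by
    rw [measure_compl Metric.isClosed_sphere.measurableSet (measure_ne_top θ _),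
      measure_univ, hsphere, tsub_self]
  refine ⟨u, U, hu_norm, ?_, ?_, hWcpt, ?_, ?_⟩
  · -- measurability, subset, positivity
    intro a
    refine ⟨measurableSet_ball.inter Metric.isClosed_sphere.measurableSet,
      inter_subset_right, ?_⟩
    have hb : θ (Metric.ball (u a) ε) ≠ 0 := hu_mem a _ (Metric.ball_mem_nhds _ hε)
    have hmono : θ (Metric.ball (u a) ε) ≤ θ (U a) := by
      calc θ (Metric.ball (u a) ε)
          ≤ θ (U a ∪ (Metric.sphere (0 : V ℓ) 1)ᶜ) := by
            apply measure_mono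
            intro x hx
            by_cases hxs : x ∈ Metric.sphere (0 : V ℓ) 1
            · exact Or.inl ⟨hx, hxs⟩
            · exact Or.inr hxs
        _ ≤ θ (U a) + θ (Metric.sphere (0 : V ℓ) 1)ᶜ := measure_union_le _ _
        _ = θ (U a) := by rw [hcompl, add_zero]
    exact lt_of_lt_of_le (pos_iff_ne_zero.mpr hb) hmono
  · -- pairwise disjoint
    intro a b hab
    rw [Function.onFun]
    rw [Set.disjoint_left]
    rintro v ⟨hva, _⟩ ⟨hvb, _⟩
    have htri : dist (u a) (u b) ≤ dist (u a) v + dist v (u b) := dist_triangle _ _ _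
    rw [Metric.mem_ball] at hva hvb
    rw [dist_comm] at hva
    have := hmle a b hab
    linarith
  · -- W' ⊆ interior W
    have hO : IsOpen (⋂ a, {x : V ℓ | (inner ℝ (u a) x : ℝ) < suppFn ℓ W' (u a) + 3}) :=
      isOpen_iInter_of_finite fun a => isOpen_lt (hinner_cont (u a)) continuous_const
    have hsub1 : W' ⊆ ⋂ a, {x : V ℓ | (inner ℝ (u a) x : ℝ) < suppFn ℓ W' (u a) + 3} := by
      intro x hx
      refine mem_iInter.mpr fun a => ?_
      have := hle (u a) x hx
      simp only [mem_setOf_eq]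
      linarith
    refine hsub1.trans (interior_maximal ?_ hO)
    exact iInter_mono fun a => setOf_subset_setOf.mpr fun x => le_of_lt
  · -- separation
    intro a v hv d hd1 hd2
    obtain ⟨hvball, hvs⟩ := hv
    rw [Metric.mem_ball, dist_eq_norm] at hvball
    have hvd : ‖v - u a‖ ≤ ε := le_of_lt hvball
    constructor
    · intro x hx
      have h1 : (inner ℝ v x : ℝ) = inner ℝ (u a) x + inner ℝ (v - u a) x := by
        rw [inner_sub_left]; ring
      have h2 : (inner ℝ (v - u a) x : ℝ) ≤ ‖v - u a‖ * ‖x‖ := real_inner_le_norm _ _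
      have h3 : ‖v - u a‖ * ‖x‖ ≤ ε * R :=
        mul_le_mul hvd (hR x hx) (norm_nonneg _) (le_of_lt hε)
      have h4 := hle (u a) x hx
      rw [h1]
      linarith
    · rintro x ⟨hxW, hxf⟩
      rw [mem_setOf_eq] at hxf
      have h1 : (inner ℝ v x : ℝ) = inner ℝ (u a) x + inner ℝ (v - u a) x := by
        rw [inner_sub_left]; ring
      have h2 : |(inner ℝ (v - u a) x : ℝ)| ≤ ‖v - u a‖ * ‖x‖ := abs_real_inner_le_norm _ _
      have h3 : ‖v - u a‖ * ‖x‖ ≤ ε * R' :=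
        mul_le_mul hvd (hR' x hxW) (norm_nonneg _) (le_of_lt hε)
      have h5 : -(1 : ℝ) ≤ inner ℝ (v - u a) x := by
        have := abs_le.mp h2
        linarith
      rw [h1, hxf]
      linarith
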